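/- Rogers' fixed point theorem: if f : code → code is computable then there exists a code c with eval (f c) = eval c. Consequently (second form), if f : code → ℕ →. ℕ is partial recursive (in both arguments) then there exists a code c with eval c = f c. -/
import Mathlib
open Nat.Partrec.Code
theorem fixed_point_thms :
    (∀ f : Nat.Partrec.Code → Nat.Partrec.Code, Computable f →
      ∃ c, eval (f c) = eval c) ∧
    (∀ f : Nat.Partrec.Code → ℕ →. ℕ, Partrec₂ f →
      ∃ c, eval c = f c) := by
  exact ⟨fun f hf => fixed_point hf, fun f hf => fixed_point₂ hf⟩
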